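/- Let L > 0 and λ be real numbers, and let Φ : ℝ → ℝ be twice continuously differentiable on [0, L] with Φ″(x) = −λΦ(x) for all x ∈ [0, L] and Φ′(0) = Φ′(L) = 0. Then ∫₀ᴸ Φ(x)·(Φ′(x))² dx = (λ/2)·∫₀ᴸ Φ(x)³ dx. -/

import Mathlib

/-- Identity (3.11) in one dimension: if `Φ` is twice continuously
differentiable on `[0, L]` with `Φ″ = −λΦ` on `[0, L]` and Neumann boundary
conditions `Φ′(0) = Φ′(L) = 0`, then
`∫₀ᴸ Φ (Φ′)² = (λ/2) ∫₀ᴸ Φ³`. -/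
theorem stmt13 (L lam : ℝ) (hL : 0 < L) (Φ Φ' : ℝ → ℝ)
    (hΦ : ∀ x ∈ Set.Icc (0 : ℝ) L, HasDerivAt Φ (Φ' x) x)
    (hΦ' : ∀ x ∈ Set.Icc (0 : ℝ) L, HasDerivAt Φ' (-lam * Φ x) x)
    (hcont : ContinuousOn (fun x => -lam * Φ x) (Set.Icc (0 : ℝ) L))
    (h0 : Φ' 0 = 0) (hLend : Φ' L = 0) :
    ∫ x in (0 : ℝ)..L, Φ x * (Φ' x) ^ 2 =
      (lam / 2) * ∫ x in (0 : ℝ)..L, (Φ x) ^ 3 := by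
  have huIcc : Set.uIcc (0 : ℝ) L = Set.Icc 0 L := Set.uIcc_of_le hL.le
  have hΦc : ContinuousOn Φ (Set.Icc (0 : ℝ) L) := fun x hx =>
    (hΦ x hx).continuousAt.continuousWithinAt
  have hΦ'c : ContinuousOn Φ' (Set.Icc (0 : ℝ) L) := fun x hx =>
    (hΦ' x hx).continuousAt.continuousWithinAt
  have hg : ∀ x ∈ Set.uIcc (0 : ℝ) L,
      HasDerivAt (fun x => Φ x ^ 2 * Φ' x)
        (2 * (Φ x * Φ' x ^ 2) - lam * Φ x ^ 3) x := by
    intro x hx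
    rw [huIcc] at hx
    have h1 : HasDerivAt (fun x => Φ x ^ 2 * Φ' x)
        ((2 : ℕ) * Φ x ^ (2 - 1) * Φ' x * Φ' x + Φ x ^ 2 * (-lam * Φ x)) x :=
      ((hΦ x hx).pow 2).mul (hΦ' x hx)
    convert h1 using 1
    ring
  have hic : ContinuousOn (fun x => 2 * (Φ x * Φ' x ^ 2) - lam * Φ x ^ 3)
      (Set.Icc (0 : ℝ) L) := by
    fun_prop
  have hint : IntervalIntegrable (fun x => 2 * (Φ x * Φ' x ^ 2) - lam * Φ x ^ 3)
      MeasureTheory.volume 0 L := by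
    apply ContinuousOn.intervalIntegrable
    rwa [huIcc]
  have key := intervalIntegral.integral_eq_sub_of_hasDerivAt hg hint
  rw [h0, hLend] at key
  simp only [mul_zero] at key
  have hi1 : IntervalIntegrable (fun x => Φ x * Φ' x ^ 2) MeasureTheory.volume 0 L := by
    apply ContinuousOn.intervalIntegrable
    rw [huIcc]; fun_prop
  have hi2 : IntervalIntegrable (fun x => Φ x ^ 3) MeasureTheory.volume 0 L := by
    apply ContinuousOn.intervalIntegrable
    rw [huIcc]; fun_prop
  rw [intervalIntegral.integral_sub ((hi1.const_mul 2)) (hi2.const_mul lam),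
    intervalIntegral.integral_const_mul, intervalIntegral.integral_const_mul] at key
  linarith
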